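/- Let κ > 0 and b ∈ ℝ. On {(x,y) ∈ ℝ² : x > y} define Λ_b(x,y) = ((4−κ)/κ)·(x−y)^{1−2/κ} log(x−y) + b·(x−y)^{−2/κ}(x+y). Then A_{κ;−2} Λ_b = 0 identically on this domain if and only if b = (4−κ)/8. -/

import Mathlib

/-- Candidate logarithmic partner for SLE_κ(ρ=-2). -/
noncomputable def Λ7 (κ b x y : ℝ) : ℝ :=
  (4 - κ) / κ * (x - y) ^ (1 - 2 / κ) * Real.log (x - y)
    + b * (x - y) ^ (-2 / κ) * (x + y)

/-- first x-derivative, closed form -/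
noncomputable def g7 (κ b y s : ℝ) : ℝ :=
  (4 - κ) / κ * (1 - 2 / κ) * (s - y) ^ (1 - 2 / κ - 1) * Real.log (s - y)
    + (4 - κ) / κ * (s - y) ^ (1 - 2 / κ - 1)
    + b * (-2 / κ) * (s - y) ^ (-2 / κ - 1) * (s + y)
    + b * (s - y) ^ (-2 / κ)

lemma hg7 (κ b y s : ℝ) (h : y < s) :
    HasDerivAt (fun x => Λ7 κ b x y) (g7 κ b y s) s := by
  have ht : (0:ℝ) < s - y := sub_pos.2 h
  have htne : s - y ≠ 0 := ne_of_gt ht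
  have hsub : HasDerivAt (fun x : ℝ => x - y) 1 s := (hasDerivAt_id s).sub_const y
  have hp1 : HasDerivAt (fun x : ℝ => (x - y) ^ (1 - 2 / κ))
      (1 * (1 - 2 / κ) * (s - y) ^ (1 - 2 / κ - 1)) s := hsub.rpow_const (Or.inl htne)
  have hp2 : HasDerivAt (fun x : ℝ => (x - y) ^ (-2 / κ))
      (1 * (-2 / κ) * (s - y) ^ (-2 / κ - 1)) s := hsub.rpow_const (Or.inl htne)
  have hlog : HasDerivAt (fun x : ℝ => Real.log (x - y)) (1 / (s - y)) s := hsub.log htne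
  have hadd : HasDerivAt (fun x : ℝ => x + y) 1 s := (hasDerivAt_id s).add_const y
  have hd := (((hp1.const_mul ((4 - κ)/κ)).mul hlog).add ((hp2.const_mul b).mul hadd))
  refine hd.congr_deriv ?_
  have e : (s - y) ^ (1 - 2 / κ - 1) = (s - y) ^ (1 - 2 / κ) * (s - y)⁻¹ := by
    rw [Real.rpow_sub ht, Real.rpow_one, div_eq_mul_inv]
  unfold g7
  rw [e]
  field_simp
  ring

/-- second x-derivative, closed form -/
noncomputable def g7' (κ b y s : ℝ) : ℝ :=
  (4 - κ) / κ * (1 - 2 / κ) * (1 - 2 / κ - 1) * (s - y) ^ (1 - 2 / κ - 1 - 1) * Real.log (s - y)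
    + (4 - κ) / κ * (1 - 2 / κ) * (s - y) ^ (1 - 2 / κ - 1 - 1)
    + (4 - κ) / κ * (1 - 2 / κ - 1) * (s - y) ^ (1 - 2 / κ - 1 - 1)
    + b * (-2 / κ) * (-2 / κ - 1) * (s - y) ^ (-2 / κ - 1 - 1) * (s + y)
    + b * (-2 / κ) * (s - y) ^ (-2 / κ - 1)
    + b * (-2 / κ) * (s - y) ^ (-2 / κ - 1)

lemma hg7' (κ b y s : ℝ) (h : y < s) :
    HasDerivAt (fun x => g7 κ b y x) (g7' κ b y s) s := by
  have ht : (0:ℝ) < s - y := sub_pos.2 h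
  have htne : s - y ≠ 0 := ne_of_gt ht
  have hsub : HasDerivAt (fun x : ℝ => x - y) 1 s := (hasDerivAt_id s).sub_const y
  have hp1 : HasDerivAt (fun x : ℝ => (x - y) ^ (1 - 2 / κ - 1))
      (1 * (1 - 2 / κ - 1) * (s - y) ^ (1 - 2 / κ - 1 - 1)) s := hsub.rpow_const (Or.inl htne)
  have hp2 : HasDerivAt (fun x : ℝ => (x - y) ^ (-2 / κ - 1))
      (1 * (-2 / κ - 1) * (s - y) ^ (-2 / κ - 1 - 1)) s := hsub.rpow_const (Or.inl htne)
  have hp3 : HasDerivAt (fun x : ℝ => (x - y) ^ (-2 / κ))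
      (1 * (-2 / κ) * (s - y) ^ (-2 / κ - 1)) s := hsub.rpow_const (Or.inl htne)
  have hlog : HasDerivAt (fun x : ℝ => Real.log (x - y)) (1 / (s - y)) s := hsub.log htne
  have hadd : HasDerivAt (fun x : ℝ => x + y) 1 s := (hasDerivAt_id s).add_const y
  have hd := ((((hp1.const_mul ((4 - κ)/κ * (1 - 2/κ))).mul hlog).add
      (hp1.const_mul ((4 - κ)/κ))).add
      ((hp2.const_mul (b * (-2/κ))).mul hadd)).add (hp3.const_mul b)
  have heq : (fun x => g7 κ b y x) = fun x =>
      ((4 - κ)/κ * (1 - 2/κ) * (x - y) ^ (1 - 2/κ - 1) * Real.log (x - y)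
        + (4 - κ)/κ * (x - y) ^ (1 - 2/κ - 1))
      + (b * (-2/κ) * (x - y) ^ (-2/κ - 1)) * (x + y)
      + b * (x - y) ^ (-2/κ) := by
    funext x; unfold g7; ring
  rw [heq]
  refine (((((hp1.const_mul ((4 - κ)/κ * (1 - 2/κ))).mul hlog).add
      (hp1.const_mul ((4 - κ)/κ))).add
      ((hp2.const_mul (b * (-2/κ))).mul hadd)).add (hp3.const_mul b)).congr_deriv ?_
  have e : (s - y) ^ (1 - 2 / κ - 1 - 1) = (s - y) ^ (1 - 2 / κ - 1) * (s - y)⁻¹ := by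
    rw [Real.rpow_sub ht, Real.rpow_one, div_eq_mul_inv]
  unfold g7'
  rw [e]
  field_simp
  ring

/-- y-derivative, closed form -/
noncomputable def h7 (κ b x y : ℝ) : ℝ :=
  -((4 - κ) / κ * (1 - 2 / κ) * (x - y) ^ (1 - 2 / κ - 1) * Real.log (x - y))
    - (4 - κ) / κ * (x - y) ^ (1 - 2 / κ - 1)
    - b * (-2 / κ) * (x - y) ^ (-2 / κ - 1) * (x + y)
    + b * (x - y) ^ (-2 / κ)

lemma hh7 (κ b x y : ℝ) (h : y < x) :
    HasDerivAt (fun y' => Λ7 κ b x y') (h7 κ b x y) y := by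
  have ht : (0:ℝ) < x - y := sub_pos.2 h
  have htne : x - y ≠ 0 := ne_of_gt ht
  have hsub : HasDerivAt (fun y' : ℝ => x - y') (-1) y := by
    simpa using ((hasDerivAt_id y).const_sub x)
  have hp1 : HasDerivAt (fun y' : ℝ => (x - y') ^ (1 - 2 / κ))
      (-1 * (1 - 2 / κ) * (x - y) ^ (1 - 2 / κ - 1)) y := hsub.rpow_const (Or.inl htne)
  have hp2 : HasDerivAt (fun y' : ℝ => (x - y') ^ (-2 / κ))
      (-1 * (-2 / κ) * (x - y) ^ (-2 / κ - 1)) y := hsub.rpow_const (Or.inl htne)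
  have hlog : HasDerivAt (fun y' : ℝ => Real.log (x - y')) (-1 / (x - y)) y := hsub.log htne
  have hadd : HasDerivAt (fun y' : ℝ => x + y') 1 y := (hasDerivAt_id y).const_add x
  have hd := (((hp1.const_mul ((4 - κ)/κ)).mul hlog).add ((hp2.const_mul b).mul hadd))
  refine hd.congr_deriv ?_
  have e : (x - y) ^ (1 - 2 / κ - 1) = (x - y) ^ (1 - 2 / κ) * (x - y)⁻¹ := by
    rw [Real.rpow_sub ht, Real.rpow_one, div_eq_mul_inv]
  unfold h7
  rw [e]
  field_simp
  ring

lemma key (κ : ℝ) (hκ : 0 < κ) (b x y : ℝ) (h : y < x) :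
    κ / 2 * deriv (fun x' => deriv (fun x'' => Λ7 κ b x'' y) x') x
      + 2 / (y - x) * deriv (fun y' => Λ7 κ b x y') y
      - (-2 : ℝ) * (-2 + 4 - κ) / (2 * κ) / (y - x) ^ 2 * Λ7 κ b x y
      = ((4 - κ) / 2 - 4 * b) * (x - y) ^ (-2 / κ - 1) := by
  have ht : (0:ℝ) < x - y := sub_pos.2 h
  have htne : x - y ≠ 0 := ne_of_gt ht
  have hd2 : deriv (fun x' => deriv (fun x'' => Λ7 κ b x'' y) x') x = g7' κ b y x := by
    have hev : (fun x' => deriv (fun x'' => Λ7 κ b x'' y) x') =ᶠ[nhds x] (fun x' => g7 κ b y x') := by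
      filter_upwards [IsOpen.mem_nhds isOpen_Ioi (show x ∈ Set.Ioi y from h)] with s hs
      exact (hg7 κ b y s hs).deriv
    rw [hev.deriv_eq]
    exact (hg7' κ b y x h).deriv
  have hdy : deriv (fun y' => Λ7 κ b x y') y = h7 κ b x y := (hh7 κ b x y h).deriv
  rw [hd2, hdy]
  unfold g7' h7 Λ7
  have erw : ∀ p q : ℝ, p = q + 1 → (x - y) ^ p = (x - y) ^ q * (x - y) := by
    intro p q hpq; rw [hpq, Real.rpow_add ht, Real.rpow_one]
  have e1 : (x - y) ^ (1 - 2 / κ) = (x - y) ^ (-2 / κ - 1) * (x - y) * (x - y) := by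
    rw [erw (1 - 2/κ) (-2/κ) (by ring), erw (-2/κ) (-2/κ - 1) (by ring)]
  have e2 : (x - y) ^ (-2 / κ) = (x - y) ^ (-2 / κ - 1) * (x - y) :=
    erw _ _ (by ring)
  have e3 : (x - y) ^ (1 - 2 / κ - 1) = (x - y) ^ (-2 / κ - 1) * (x - y) := by
    rw [show (1 - 2/κ - 1 : ℝ) = -2/κ by ring]; exact erw _ _ (by ring)
  have e5 : (x - y) ^ (1 - 2 / κ - 1 - 1) = (x - y) ^ (-2 / κ - 1) := by
    rw [show (1 - 2/κ - 1 - 1 : ℝ) = -2/κ - 1 by ring]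
  have e6 : (x - y) ^ (-2 / κ - 1 - 1) = (x - y) ^ (-2 / κ - 1) / (x - y) := by
    rw [show (-2/κ - 1 - 1 : ℝ) = (-2/κ - 1) - 1 by ring, Real.rpow_sub ht, Real.rpow_one]
  rw [e1, e2, e3, e5, e6]
  have hyx : y - x ≠ 0 := by intro h0; apply htne; linarith [sub_eq_zero.mp h0]
  field_simp
  ring

/-- `A_{κ;-2} Λ_b = 0` identically on `{x > y}` iff `b = (4-κ)/8`. -/
theorem stmt_7 (κ : ℝ) (hκ : 0 < κ) (b : ℝ) :
    (∀ x y : ℝ, y < x →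
        κ / 2 * deriv (fun x' => deriv (fun x'' => Λ7 κ b x'' y) x') x
          + 2 / (y - x) * deriv (fun y' => Λ7 κ b x y') y
          - (-2 : ℝ) * (-2 + 4 - κ) / (2 * κ) / (y - x) ^ 2 * Λ7 κ b x y = 0)
      ↔ b = (4 - κ) / 8 := by
  constructor
  · intro H
    have h1 := H 1 0 one_pos
    rw [key κ hκ b 1 0 one_pos] at h1
    norm_num [Real.one_rpow] at h1
    linarith
  · intro hb x y h
    rw [key κ hκ b x y h, hb]
    ring
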